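/- Let G be a doubly regular tournament of size n = 4k+3 and let G₁ be the tournament of size n-1 obtained by deleting one vertex. Then the Seidel matrix S₁ of G₁ has eigenvalues √n, 1, -1, -√n with multiplicities (n-3)/2, 1, 1, (n-3)/2 respectively. -/

import Mathlib

open Matrix Polynomial
noncomputable section

lemma charpoly_conj_aux {m : Type*} [DecidableEq m] [Fintype m]
    (U V M : Matrix m m ℂ) (hUV : U * V = 1) :
    (U * M * V).charpoly = M.charpoly := by
  have h1 : charmatrix (U * M * V) =
      C.mapMatrix U * charmatrix M * C.mapMatrix V := by
    rw [charmatrix, charmatrix, Matrix.mul_sub, Matrix.sub_mul]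
    congr 1
    · have hcomm : Commute (Matrix.scalar m (X : ℂ[X])) (C.mapMatrix V) :=
        Matrix.scalar_commute _ (fun r' => Commute.all _ _) _
      rw [mul_assoc, hcomm.eq, ← mul_assoc, ← _root_.map_mul, hUV, _root_.map_one, one_mul]
    · rw [← _root_.map_mul, ← _root_.map_mul]
  have hdet : ((C.mapMatrix U).det) * ((C.mapMatrix V).det) = 1 := by
    rw [← Matrix.det_mul, ← _root_.map_mul, hUV, _root_.map_one, Matrix.det_one]
  rw [Matrix.charpoly, h1, Matrix.det_mul, Matrix.det_mul, Matrix.charpoly]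
  calc (C.mapMatrix U).det * (charmatrix M).det * (C.mapMatrix V).det
      = (charmatrix M).det * ((C.mapMatrix U).det * (C.mapMatrix V).det) := by ring
    _ = (charmatrix M).det := by rw [hdet, mul_one]

lemma charpoly_diagonal_aux {m : Type*} [DecidableEq m] [Fintype m] (d : m → ℂ) :
    (Matrix.diagonal d).charpoly = ∏ i, (X - C (d i)) := by
  have h : charmatrix (Matrix.diagonal d) = Matrix.diagonal fun i => X - C (d i) := by
    ext i j
    by_cases hij : i = j
    · subst hij; simp [charmatrix_apply]
    · simp [charmatrix_apply, Matrix.diagonal_apply_ne _ hij, hij]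
  rw [Matrix.charpoly, h, Matrix.det_diagonal]

lemma rootMultiplicity_prod_X_sub_C {N : ℕ} (c : Fin N → ℂ) (μ : ℂ) :
    (∏ i, (X - C (c i))).rootMultiplicity μ = (Finset.univ.filter fun i => c i = μ).card := by
  have hprod : (∏ i, (X - C (c i))) =
      ((Finset.univ.val.map c).map fun a => X - C a).prod := by
    rw [Multiset.map_map]; rfl
  rw [← Polynomial.count_roots, hprod, Polynomial.roots_multiset_prod_X_sub_C,
    Multiset.count_map]
  rw [show (Finset.filter (fun i => c i = μ) Finset.univ).card
      = Multiset.card (Multiset.filter (fun i => c i = μ) Finset.univ.val) from rfl]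
  congr 1
  ext a
  simp [eq_comm]

def IsTournament {n : ℕ} (A : Matrix (Fin n) (Fin n) ℝ) : Prop :=
  (∀ i j, A i j = 0 ∨ A i j = 1) ∧ (∀ i, A i i = 0) ∧
    A + Aᵀ = (Matrix.of fun _ _ => (1:ℝ)) - 1

def Seidel {n : ℕ} (A : Matrix (Fin n) (Fin n) ℝ) : Matrix (Fin n) (Fin n) ℂ :=
  Complex.I • ((A - Aᵀ).map Complex.ofReal)

def IsDoublyRegular {n : ℕ} (A : Matrix (Fin n) (Fin n) ℝ) : Prop :=
  A.mulVec (fun _ => 1) = (fun _ => ((n : ℝ) - 1) / 2) ∧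
  A * Aᵀ = (((n : ℝ) + 1) / 4) • 1 + (((n : ℝ) - 3) / 4) • Matrix.of fun _ _ => 1

theorem deleted_vertex_seidel_spectrum {k : ℕ}
    (A : Matrix (Fin (4 * k + 3)) (Fin (4 * k + 3)) ℝ)
    (hA : IsTournament A) (hdr : IsDoublyRegular A)
    (x : Fin (4 * k + 3))
    (A₁ : Matrix (Fin (4 * k + 2)) (Fin (4 * k + 2)) ℝ)
    (hA₁ : A₁ = A.submatrix (fun i => x.succAbove i) (fun i => x.succAbove i)) :
    (Seidel A₁).charpoly.rootMultiplicity (Real.sqrt (4 * k + 3) : ℂ) = 2 * k ∧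
    (Seidel A₁).charpoly.rootMultiplicity 1 = 1 ∧
    (Seidel A₁).charpoly.rootMultiplicity (-1) = 1 ∧
    (Seidel A₁).charpoly.rootMultiplicity (-(Real.sqrt (4 * k + 3) : ℂ)) = 2 * k := by
  obtain ⟨hA01, hAdiag, hAsym⟩ := hA
  obtain ⟨hrow', hAAT'⟩ := hdr
  set J : Matrix (Fin (4*k+3)) (Fin (4*k+3)) ℝ := Matrix.of fun _ _ => (1:ℝ) with hJ
  have hsym : ∀ i j : Fin (4*k+3), A i j + A j i = (if i = j then 0 else 1) := by
    intro i j
    have h := congrFun (congrFun hAsym i) j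
    simp only [Matrix.add_apply, Matrix.transpose_apply, Matrix.sub_apply, Matrix.of_apply,
      Matrix.one_apply, hJ] at h
    rw [h]; split_ifs <;> norm_num
  have hrow : ∀ i, ∑ j, A i j = 2*(k:ℝ)+1 := by
    intro i
    have h := congrFun hrow' i
    simp only [Matrix.mulVec, dotProduct, mul_one] at h
    rw [h]; push_cast; ring
  have hcol : ∀ j, ∑ i, A i j = 2*(k:ℝ)+1 := by
    intro j
    have h : ∑ i, A i j = ∑ i, ((if i = j then (0:ℝ) else 1) - A j i) := by
      apply Finset.sum_congr rfl
      intro i _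
      have := hsym i j
      linarith
    have h2 : (∑ x : Fin (4*k+3), if x = j then (0:ℝ) else 1) = 4*(k:ℝ)+2 := by
      have he : ∀ x : Fin (4*k+3), (if x = j then (0:ℝ) else 1) = 1 - (if x = j then 1 else 0) := by
        intro x; split_ifs <;> ring
      simp_rw [he, Finset.sum_sub_distrib, Finset.sum_const, Finset.sum_ite_eq']
      simp only [Finset.mem_univ, if_true, Finset.card_univ, Fintype.card_fin, nsmul_eq_mul,
        mul_one]
      push_cast; ring
    rw [h, Finset.sum_sub_distrib, h2, hrow j]
    ring
  have hJJ : J * J = (4*(k:ℝ)+3) • J := by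
    ext i j
    simp only [Matrix.mul_apply, hJ, Matrix.of_apply, Matrix.smul_apply, smul_eq_mul, mul_one,
      Finset.sum_const, Finset.card_univ, Fintype.card_fin, nsmul_eq_mul]
    push_cast; ring
  have hAJ : A * J = (2*(k:ℝ)+1) • J := by
    ext i j
    simp only [Matrix.mul_apply, hJ, Matrix.of_apply, Matrix.smul_apply, smul_eq_mul, mul_one]
    rw [hrow i]
  have hJA : J * A = (2*(k:ℝ)+1) • J := by
    ext i j
    simp only [Matrix.mul_apply, hJ, Matrix.of_apply, Matrix.smul_apply, smul_eq_mul, one_mul,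
      mul_one]
    rw [hcol j]
  have hAT : Aᵀ = J - 1 - A := eq_sub_iff_add_eq'.mpr hAsym
  have hAAT : A * Aᵀ = ((k:ℝ)+1) • 1 + (k:ℝ) • J := by
    have hc1 : (((4*k+3:ℕ):ℝ)+1)/4 = (k:ℝ)+1 := by push_cast; ring
    have hc2 : (((4*k+3:ℕ):ℝ)-3)/4 = (k:ℝ) := by push_cast; ring
    rw [hAAT', hc1, hc2]
  have hAA : A * A = ((2*(k:ℝ)+1) • J - A) - (((k:ℝ)+1) • 1 + (k:ℝ) • J) := by
    have h : (2*(k:ℝ)+1) • J - A - A * A = ((k:ℝ)+1) • 1 + (k:ℝ) • J := by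
      have h0 : A * Aᵀ = A * J - A - A * A := by
        rw [hAT, Matrix.mul_sub, Matrix.mul_sub, Matrix.mul_one]
      rw [← hAAT, h0, hAJ]
    rw [eq_sub_iff_add_eq, ← h]
    abel
  have hATA : Aᵀ * A = ((k:ℝ)+1) • 1 + (k:ℝ) • J := by
    rw [hAT, Matrix.sub_mul, Matrix.sub_mul, Matrix.one_mul, hJA, hAA]
    abel
  have hJT : Jᵀ = J := by ext i j; simp [hJ]
  have hATAT : Aᵀ * Aᵀ = ((2*(k:ℝ)+1) • J - (J - 1 - A)) - (((k:ℝ)+1) • 1 + (k:ℝ) • J) := by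
    have h := congrArg Matrix.transpose hAA
    rw [Matrix.transpose_mul] at h
    rw [h]
    simp only [Matrix.transpose_sub, Matrix.transpose_add, Matrix.transpose_smul,
      Matrix.transpose_one, hJT, hAT]
  have hM2 : (A - Aᵀ) * (A - Aᵀ) = J - (4*(k:ℝ)+3) • 1 := by
    have hexp : (A - Aᵀ) * (A - Aᵀ) = A*A - A*Aᵀ - (Aᵀ*A - Aᵀ*Aᵀ) := by
      rw [Matrix.sub_mul, Matrix.mul_sub, Matrix.mul_sub]
    rw [hexp, hAA, hAAT, hATA, hATAT]
    module
  -- submatrix part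
  set f : Fin (4*k+2) → Fin (4*k+3) := x.succAbove with hf
  set M : Matrix (Fin (4*k+3)) (Fin (4*k+3)) ℝ := A - Aᵀ with hM
  set w : Fin (4*k+2) → ℝ := fun i => M (f i) x with hw
  have hfinj : Function.Injective f := Fin.succAbove_right_injective
  have hfne : ∀ i, f i ≠ x := fun i => Fin.succAbove_ne x i
  have hManti : ∀ i j, M j i = - M i j := by
    intro i j; simp only [hM, Matrix.sub_apply, Matrix.transpose_apply]; ring
  have hw1 : ∀ i, w i * w i = 1 := by
    intro i
    have h := hsym (f i) x
    rw [if_neg (hfne i)] at h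
    have hwdef : w i = A (f i) x - A x (f i) := by
      simp [hw, hM, Matrix.sub_apply]
    rcases hA01 (f i) x with h1 | h1 <;> rcases hA01 x (f i) with h2 | h2
    · exfalso; rw [h1, h2] at h; norm_num at h
    · rw [hwdef, h1, h2]; norm_num
    · rw [hwdef, h1, h2]; norm_num
    · exfalso; rw [h1, h2] at h; norm_num at h
  have hw0 : ∑ i, w i = 0 := by
    have hsum := Fin.sum_univ_succAbove (fun l => A l x - A x l) x
    have h1 : ∑ l, (A l x - A x l) = 0 := by
      rw [Finset.sum_sub_distrib, hcol x, hrow x]; ring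
    rw [h1] at hsum
    have h2 : ∑ i, w i = ∑ i : Fin (4*k+2), (A (f i) x - A x (f i)) := by
      apply Finset.sum_congr rfl; intro i _
      simp [hw, hM, Matrix.sub_apply]
    rw [h2]
    simp only [sub_self, zero_add] at hsum
    linarith [hsum]
  have hM1sq : (M.submatrix f f) * (M.submatrix f f)
      = ((Matrix.of fun _ _ => (1:ℝ)) - (4*(k:ℝ)+3) • 1) + Matrix.vecMulVec w w := by
    ext i j
    have hsum := Fin.sum_univ_succAbove (fun l => M (f i) l * M l (f j)) x
    have hM2e := congrFun (congrFun hM2 (f i)) (f j)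
    simp only [Matrix.sub_apply, Matrix.smul_apply, hJ, Matrix.of_apply, Matrix.one_apply,
      smul_eq_mul] at hM2e
    have hifeq : (if f i = f j then (1:ℝ) else 0) = (if i = j then 1 else 0) := by
      by_cases hij : i = j
      · rw [if_pos hij, if_pos (by rw [hij])]
      · rw [if_neg hij, if_neg (fun hc => hij (hfinj hc))]
    rw [hifeq] at hM2e
    have hxj : M x (f j) = - w j := by rw [hw]; exact hManti (f j) x
    have hxi : M (f i) x = w i := rfl
    rw [← hf, hxj, hxi] at hsum
    have hfull : (M * M) (f i) (f j)
        = w i * - w j + ∑ l, M (f i) (f l) * M (f l) (f j) := hsum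
    rw [hM2e] at hfull
    simp only [Matrix.mul_apply, Matrix.submatrix_apply, Matrix.add_apply, Matrix.sub_apply,
      Matrix.smul_apply, Matrix.of_apply, Matrix.one_apply, Matrix.vecMulVec_apply, smul_eq_mul]
    split_ifs at hfull ⊢ <;> linarith [hfull]
  -- complex layer
  have hA1M : A₁ - A₁ᵀ = M.submatrix f f := by
    rw [hA₁]; ext i j
    simp [hM, Matrix.submatrix_apply, Matrix.transpose_apply, Matrix.sub_apply, hf]
  have hS1 : Seidel A₁ = Complex.I • ((M.submatrix f f).map Complex.ofReal) := by
    rw [Seidel, hA1M]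
  set wc : Fin (4*k+2) → ℂ := fun i => ((w i : ℝ) : ℂ) with hwc
  set Jc : Matrix (Fin (4*k+2)) (Fin (4*k+2)) ℂ := Matrix.of fun _ _ => (1:ℂ) with hJc
  set W : Matrix (Fin (4*k+2)) (Fin (4*k+2)) ℂ := Matrix.vecMulVec wc wc with hW
  have hwc1 : ∀ i, wc i * wc i = 1 := by
    intro i
    rw [hwc]
    push_cast [← Complex.ofReal_mul, hw1 i]
    norm_num
  have hwc0 : ∑ i, wc i = 0 := by
    rw [hwc]
    push_cast [← Complex.ofReal_sum]
    exact_mod_cast congrArg (Complex.ofReal) hw0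
  have hmapmul : ((M.submatrix f f).map Complex.ofReal) * ((M.submatrix f f).map Complex.ofReal)
      = ((M.submatrix f f) * (M.submatrix f f)).map Complex.ofReal := by
    have := (Matrix.map_mul (L := M.submatrix f f) (M := M.submatrix f f)
      (f := Complex.ofRealHom)).symm
    exact this
  have hS1sq : Seidel A₁ * Seidel A₁ = (4*(k:ℂ)+3) • 1 - Jc - W := by
    rw [hS1, smul_mul_smul_comm, Complex.I_mul_I, hmapmul, hM1sq]
    ext i j
    simp only [Matrix.smul_apply, Matrix.map_apply, Matrix.add_apply, Matrix.sub_apply,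
      Matrix.of_apply, Matrix.one_apply, Matrix.vecMulVec_apply, hJc, hW, hwc,
      Matrix.smul_apply, smul_eq_mul, Complex.ofReal_add, Complex.ofReal_sub,
      Complex.ofReal_mul, Complex.ofReal_one]
    split_ifs <;> push_cast <;> ring
  have hH : (Seidel A₁).IsHermitian := by
    rw [hS1]
    show _ᴴ = _
    ext i j
    simp only [Matrix.conjTranspose_apply, Matrix.smul_apply, Matrix.map_apply,
      Matrix.submatrix_apply, smul_eq_mul, star_mul', Complex.star_def, Complex.conj_I,
      Complex.conj_ofReal]
    rw [hManti (f i) (f j)]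
    push_cast
    ring
  set ev : Fin (4*k+2) → ℝ := hH.eigenvalues with hev
  set U : Matrix (Fin (4*k+2)) (Fin (4*k+2)) ℂ :=
    (Matrix.IsHermitian.eigenvectorUnitary hH : Matrix (Fin (4*k+2)) (Fin (4*k+2)) ℂ) with hU
  set D : Matrix (Fin (4*k+2)) (Fin (4*k+2)) ℂ :=
    Matrix.diagonal (fun i => ((ev i : ℝ) : ℂ)) with hD
  have hDeq : Matrix.diagonal ((RCLike.ofReal : ℝ → ℂ) ∘ hH.eigenvalues) = D := by
    rw [hD]; rfl
  have hUV : U * star U = 1 :=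
    Matrix.mem_unitaryGroup_iff.mp (Matrix.IsHermitian.eigenvectorUnitary hH).2
  have hVU : star U * U = 1 :=
    Matrix.mem_unitaryGroup_iff'.mp (Matrix.IsHermitian.eigenvectorUnitary hH).2
  have hspec : Seidel A₁ = U * D * star U := by
    rw [← hDeq, hU]
    exact hH.spectral_theorem
  have hcp : (Seidel A₁).charpoly = ∏ i, (X - C ((ev i : ℝ) : ℂ)) := by
    rw [hspec, charpoly_conj_aux U (star U) D hUV, hD, charpoly_diagonal_aux]
  -- trace of S₁ is 0
  have htr0 : Matrix.trace (Seidel A₁) = 0 := by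
    rw [hS1, Matrix.trace_smul]
    have : Matrix.trace ((M.submatrix f f).map Complex.ofReal) = 0 := by
      rw [Matrix.trace]
      apply Finset.sum_eq_zero
      intro i _
      simp [Matrix.diag, hM, Matrix.submatrix_apply, Matrix.sub_apply]
    rw [this, smul_zero]
  have htrD : Matrix.trace (Seidel A₁) = ∑ i, ((ev i : ℝ) : ℂ) := by
    rw [hspec, Matrix.trace_mul_cycle, hVU, Matrix.one_mul, hD, Matrix.trace_diagonal]
  have hev0 : ∑ i, ev i = 0 := by
    have h := htrD.symm.trans htr0
    exact_mod_cast h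
  -- S₁² spectral form and trace
  have hsqspec : Seidel A₁ * Seidel A₁ = U * (D * D) * star U := by
    rw [hspec]
    have h1 : U * D * star U * (U * D * star U) = U * D * (star U * U) * D * star U := by
      simp only [Matrix.mul_assoc]
    rw [h1, hVU, Matrix.mul_one]
    simp only [Matrix.mul_assoc]
  have htrsq1 : Matrix.trace (Seidel A₁ * Seidel A₁) = ∑ i, ((ev i : ℝ) : ℂ)^2 := by
    rw [hsqspec, Matrix.trace_mul_cycle, hVU, Matrix.one_mul, hD,
      Matrix.diagonal_mul_diagonal, Matrix.trace_diagonal]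
    exact Finset.sum_congr rfl fun i _ => (pow_two (((ev i : ℝ)) : ℂ)).symm
  have htrsq2 : Matrix.trace (Seidel A₁ * Seidel A₁) = (4*(k:ℂ)+2)*(4*(k:ℂ)+1) := by
    rw [hS1sq, Matrix.trace_sub, Matrix.trace_sub, Matrix.trace_smul, Matrix.trace_one]
    have h1 : Matrix.trace Jc = (4*(k:ℂ)+2) := by
      rw [Matrix.trace, hJc]
      simp only [Matrix.diag, Matrix.of_apply, Finset.sum_const, Finset.card_univ,
        Fintype.card_fin, nsmul_eq_mul, mul_one]
      push_cast; ring
    have h2 : Matrix.trace W = (4*(k:ℂ)+2) := by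
      rw [Matrix.trace, hW]
      have : ∀ i ∈ Finset.univ, Matrix.diag (Matrix.vecMulVec wc wc) i = 1 := by
        intro i _
        simp [Matrix.diag, Matrix.vecMulVec_apply, hwc1 i]
      rw [Finset.sum_congr rfl this]
      simp only [Finset.sum_const, Finset.card_univ, Fintype.card_fin, nsmul_eq_mul, mul_one]
      push_cast; ring
    rw [h1, h2]
    simp only [Finset.card_univ, Fintype.card_fin, smul_eq_mul]
    push_cast
    ring
  have hev2 : ∑ i, (ev i)^2 = (4*(k:ℝ)+2)*(4*(k:ℝ)+1) := by
    have h := htrsq1.symm.trans htrsq2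
    have h2 : ((∑ i, (ev i)^2 : ℝ) : ℂ) = (((4*(k:ℝ)+2)*(4*(k:ℝ)+1) : ℝ) : ℂ) := by
      push_cast
      push_cast at h
      convert h using 2
    exact_mod_cast h2
  -- products of Jc and W
  have hJcJc : Jc * Jc = (4*(k:ℂ)+2) • Jc := by
    ext i j
    simp only [Matrix.mul_apply, hJc, Matrix.of_apply, Matrix.smul_apply, smul_eq_mul, mul_one,
      Finset.sum_const, Finset.card_univ, Fintype.card_fin, nsmul_eq_mul]
    push_cast; ring
  have hJcW : Jc * W = 0 := by
    ext i j
    simp only [Matrix.mul_apply, hJc, hW, Matrix.of_apply, Matrix.vecMulVec_apply,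
      Matrix.zero_apply, one_mul]
    rw [← Finset.sum_mul, hwc0, zero_mul]
  have hWJc : W * Jc = 0 := by
    ext i j
    simp only [Matrix.mul_apply, hJc, hW, Matrix.of_apply, Matrix.vecMulVec_apply,
      Matrix.zero_apply, mul_one]
    rw [← Finset.mul_sum, hwc0, mul_zero]
  have hWW : W * W = (4*(k:ℂ)+2) • W := by
    ext i j
    simp only [Matrix.mul_apply, hW, Matrix.vecMulVec_apply, Matrix.smul_apply, smul_eq_mul]
    have : ∀ l ∈ Finset.univ, wc i * wc l * (wc l * wc j) = wc i * wc j := by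
      intro l _
      have h := hwc1 l
      calc wc i * wc l * (wc l * wc j) = (wc l * wc l) * (wc i * wc j) := by ring
        _ = wc i * wc j := by rw [h, one_mul]
    rw [Finset.sum_congr rfl this]
    simp only [Finset.sum_const, Finset.card_univ, Fintype.card_fin, nsmul_eq_mul]
    push_cast; ring
  set P : Matrix (Fin (4*k+2)) (Fin (4*k+2)) ℂ := Jc + W with hP
  have hPP : P * P = (4*(k:ℂ)+2) • P := by
    rw [hP, Matrix.add_mul, Matrix.mul_add, Matrix.mul_add, hJcJc, hJcW, hWJc, hWW, smul_add]
    abel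
  have hquart : (Seidel A₁ * Seidel A₁ - 1) * (Seidel A₁ * Seidel A₁ - (4*(k:ℂ)+3) • 1) = 0 := by
    have hSP : Seidel A₁ * Seidel A₁ = (4*(k:ℂ)+3) • 1 - P := by
      rw [hS1sq, hP]; abel
    rw [hSP]
    have e1 : (4*(k:ℂ)+3) • (1 : Matrix (Fin (4*k+2)) (Fin (4*k+2)) ℂ) - P - 1
        = (4*(k:ℂ)+2) • 1 - P := by module
    have e2 : (4*(k:ℂ)+3) • (1 : Matrix (Fin (4*k+2)) (Fin (4*k+2)) ℂ) - P
        - (4*(k:ℂ)+3) • 1 = -P := by module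
    rw [e1, e2, Matrix.sub_mul, Matrix.smul_mul, Matrix.one_mul, mul_neg, hPP]
    module
  -- transfer to diagonal
  have hDq : (D * D - 1) * (D * D - (4*(k:ℂ)+3) • 1) = 0 := by
    have key : ∀ c : ℂ, Seidel A₁ * Seidel A₁ - c • 1 = U * (D * D - c • 1) * star U := by
      intro c
      rw [hsqspec, Matrix.mul_sub, Matrix.sub_mul]
      congr 1
      rw [Matrix.mul_smul, Matrix.smul_mul, Matrix.mul_one, hUV]
    have h1 : Seidel A₁ * Seidel A₁ - 1 = U * (D * D - 1) * star U := by
      have := key 1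
      rwa [one_smul] at this
    have h2 := key ((4*(k:ℂ)+3))
    rw [h1, h2] at hquart
    have h3 : U * ((D * D - 1) * (D * D - (4*(k:ℂ)+3) • 1)) * star U = 0 := by
      have h4 : U * (D * D - 1) * star U * (U * (D * D - (4*(k:ℂ)+3) • 1) * star U)
          = U * ((D * D - 1) * ((star U * U) * ((D * D - (4*(k:ℂ)+3) • 1) * star U))) := by
        simp only [Matrix.mul_assoc]
      rw [← hquart, h4, hVU, Matrix.one_mul]
      simp only [Matrix.mul_assoc]
    have h5 := congrArg (fun Z => star U * Z * U) h3
    simp only [Matrix.mul_zero, Matrix.zero_mul] at h5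
    rw [show star U * (U * ((D * D - 1) * (D * D - (4*(k:ℂ)+3) • 1)) * star U) * U
        = (star U * U) * ((D * D - 1) * (D * D - (4*(k:ℂ)+3) • 1)) * (star U * U) by
      simp only [Matrix.mul_assoc], hVU, Matrix.one_mul, Matrix.mul_one] at h5
    exact h5
  have hqr : ∀ i, ((ev i)^2 - 1) * ((ev i)^2 - (4*(k:ℝ)+3)) = 0 := by
    intro i
    have hdiag : (D * D - 1) * (D * D - (4*(k:ℂ)+3) • 1)
        = Matrix.diagonal (fun i => (((ev i : ℝ):ℂ)^2 - 1) * (((ev i : ℝ):ℂ)^2 - (4*(k:ℂ)+3))) := by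
      rw [hD, Matrix.diagonal_mul_diagonal, ← Matrix.diagonal_one, ← Matrix.diagonal_smul,
        Matrix.diagonal_sub, Matrix.diagonal_sub, Matrix.diagonal_mul_diagonal]
      refine congrArg Matrix.diagonal (funext fun j => ?_)
      simp only [Pi.smul_apply, smul_eq_mul, Pi.one_apply, Pi.sub_apply, Pi.mul_apply, mul_one]
      push_cast
      ring
    rw [hdiag] at hDq
    have h := congrFun (congrFun hDq i) i
    rw [Matrix.diagonal_apply_eq, Matrix.zero_apply] at h
    have h2 : ((((ev i)^2 - 1) * ((ev i)^2 - (4*(k:ℝ)+3)) : ℝ) : ℂ) = 0 := by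
      push_cast
      convert h using 2 <;> push_cast <;> ring
    exact_mod_cast h2
  -- classification of eigenvalues
  set sq : ℝ := Real.sqrt (4*(k:ℝ)+3) with hsqdef
  have hsqnn : (0:ℝ) ≤ 4*(k:ℝ)+3 := by positivity
  have hsq2 : sq^2 = 4*(k:ℝ)+3 := Real.sq_sqrt hsqnn
  have hsqgt1 : 1 < sq := by
    rw [hsqdef, show (1:ℝ) = Real.sqrt 1 by simp]
    apply Real.sqrt_lt_sqrt (by norm_num)
    have : (0:ℝ) ≤ (k:ℝ) := Nat.cast_nonneg k
    linarith
  have hclass : ∀ i, ev i = 1 ∨ ev i = -1 ∨ ev i = sq ∨ ev i = -sq := by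
    intro i
    rcases mul_eq_zero.mp (hqr i) with h | h
    · have h1 : (ev i - 1) * (ev i + 1) = 0 := by linear_combination h
      rcases mul_eq_zero.mp h1 with h2 | h2
      · left; linarith
      · right; left; linarith
    · have h1 : (ev i - sq) * (ev i + sq) = 0 := by linear_combination h - hsq2
      rcases mul_eq_zero.mp h1 with h2 | h2
      · right; right; left; linarith
      · right; right; right; linarith
  classical
  set s1 := Finset.univ.filter (fun i => ev i = 1) with hs1
  set s2 := Finset.univ.filter (fun i => ev i = -1) with hs2
  set s3 := Finset.univ.filter (fun i => ev i = sq) with hs3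
  set s4 := Finset.univ.filter (fun i => ev i = -sq) with hs4
  have hd12 : Disjoint s1 s2 := by
    rw [Finset.disjoint_left]; intro i h1 h2
    rw [hs1, Finset.mem_filter] at h1; rw [hs2, Finset.mem_filter] at h2
    linarith [h1.2, h2.2]
  have hd13 : Disjoint s1 s3 := by
    rw [Finset.disjoint_left]; intro i h1 h2
    rw [hs1, Finset.mem_filter] at h1; rw [hs3, Finset.mem_filter] at h2
    linarith [h1.2, h2.2]
  have hd14 : Disjoint s1 s4 := by
    rw [Finset.disjoint_left]; intro i h1 h2
    rw [hs1, Finset.mem_filter] at h1; rw [hs4, Finset.mem_filter] at h2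
    linarith [h1.2, h2.2]
  have hd23 : Disjoint s2 s3 := by
    rw [Finset.disjoint_left]; intro i h1 h2
    rw [hs2, Finset.mem_filter] at h1; rw [hs3, Finset.mem_filter] at h2
    linarith [h1.2, h2.2]
  have hd24 : Disjoint s2 s4 := by
    rw [Finset.disjoint_left]; intro i h1 h2
    rw [hs2, Finset.mem_filter] at h1; rw [hs4, Finset.mem_filter] at h2
    linarith [h1.2, h2.2]
  have hd34 : Disjoint s3 s4 := by
    rw [Finset.disjoint_left]; intro i h1 h2
    rw [hs3, Finset.mem_filter] at h1; rw [hs4, Finset.mem_filter] at h2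
    linarith [h1.2, h2.2]
  have hcover : s1 ∪ s2 ∪ s3 ∪ s4 = Finset.univ := by
    ext i
    simp only [Finset.mem_union, hs1, hs2, hs3, hs4, Finset.mem_filter, Finset.mem_univ,
      true_and, iff_true]
    rcases hclass i with h | h | h | h
    · exact Or.inl (Or.inl (Or.inl h))
    · exact Or.inl (Or.inl (Or.inr h))
    · exact Or.inl (Or.inr h)
    · exact Or.inr h
  have hdu1 : Disjoint (s1 ∪ s2) s3 := Finset.disjoint_union_left.mpr ⟨hd13, hd23⟩
  have hdu2 : Disjoint (s1 ∪ s2 ∪ s3) s4 :=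
    Finset.disjoint_union_left.mpr ⟨Finset.disjoint_union_left.mpr ⟨hd14, hd24⟩, hd34⟩
  have hcards : s1.card + s2.card + s3.card + s4.card = 4*k+2 := by
    have h := congrArg Finset.card hcover
    rw [Finset.card_union_of_disjoint hdu2, Finset.card_union_of_disjoint hdu1,
      Finset.card_union_of_disjoint hd12, Finset.card_univ, Fintype.card_fin] at h
    exact h
  -- sums over the partition
  have hsum_univ : ∀ (g : Fin (4*k+2) → ℝ), ∑ i, g i
      = ∑ i ∈ s1, g i + ∑ i ∈ s2, g i + ∑ i ∈ s3, g i + ∑ i ∈ s4, g i := by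
    intro g
    rw [← hcover, Finset.sum_union hdu2, Finset.sum_union hdu1, Finset.sum_union hd12]
  have hsum_s : ∀ (v : ℝ) (s : Finset (Fin (4*k+2))), (∀ i ∈ s, ev i = v) →
      ∑ i ∈ s, ev i = s.card * v := by
    intro v s hv
    rw [Finset.sum_congr rfl hv, Finset.sum_const, nsmul_eq_mul]
  have hsq_s : ∀ (v : ℝ) (s : Finset (Fin (4*k+2))), (∀ i ∈ s, ev i = v) →
      ∑ i ∈ s, (ev i)^2 = s.card * v^2 := by
    intro v s hv
    have : ∀ i ∈ s, (ev i)^2 = v^2 := fun i hi => by rw [hv i hi]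
    rw [Finset.sum_congr rfl this, Finset.sum_const, nsmul_eq_mul]
  have hm1 : ∀ i ∈ s1, ev i = 1 := fun i hi => (Finset.mem_filter.mp hi).2
  have hm2 : ∀ i ∈ s2, ev i = -1 := fun i hi => (Finset.mem_filter.mp hi).2
  have hm3 : ∀ i ∈ s3, ev i = sq := fun i hi => (Finset.mem_filter.mp hi).2
  have hm4 : ∀ i ∈ s4, ev i = -sq := fun i hi => (Finset.mem_filter.mp hi).2
  have hsum1 : (s1.card:ℝ)*1 + s2.card*(-1) + s3.card*sq + s4.card*(-sq) = 0 := by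
    rw [← hsum_s 1 s1 hm1, ← hsum_s (-1) s2 hm2, ← hsum_s sq s3 hm3, ← hsum_s (-sq) s4 hm4,
      ← hsum_univ ev, hev0]
  have hsum2 : (s1.card:ℝ) + s2.card + s3.card*(4*(k:ℝ)+3) + s4.card*(4*(k:ℝ)+3)
      = (4*(k:ℝ)+2)*(4*(k:ℝ)+1) := by
    have h := hsum_univ (fun i => (ev i)^2)
    rw [hev2, hsq_s 1 s1 hm1, hsq_s (-1) s2 hm2, hsq_s sq s3 hm3, hsq_s (-sq) s4 hm4,
      ] at h
    simp only [neg_sq, hsq2] at h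
    norm_num at h
    linarith only [h]
  -- irrationality of sq
  have hirr : Irrational sq := by
    have hcast : (4*(k:ℝ)+3) = ((4*k+3 : ℕ) : ℝ) := by push_cast; ring
    rw [hsqdef, hcast]
    rw [irrational_sqrt_natCast_iff]
    rintro ⟨r, hr⟩
    rcases Nat.even_or_odd r with ⟨t, ht⟩ | ⟨t, ht⟩
    · subst ht
      have h2 : 4*k+3 = 4*(t*t) := by rw [hr]; ring
      have hm : (4*(t*t)) % 4 = 0 := Nat.mul_mod_right 4 _
      rw [← h2] at hm
      omega
    · subst ht
      have h2 : 4*k+3 = 4*(t*t+t)+1 := by rw [hr]; ring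
      set m := t*t+t with hmdef
      omega
  -- c = d and a = b
  have hcd : (s3.card:ℝ) = s4.card := by
    by_contra hne
    have hdc : ((s4.card:ℝ) - s3.card) ≠ 0 := fun h0 => hne (by linarith)
    apply hirr
    refine ⟨((s1.card:ℚ) - s2.card)/((s4.card:ℚ) - s3.card), ?_⟩
    have hq : ((((s1.card:ℚ) - s2.card)/((s4.card:ℚ) - s3.card) : ℚ) : ℝ)
        = ((s1.card:ℝ) - s2.card)/((s4.card:ℝ) - s3.card) := by push_cast; ring
    rw [hq, eq_comm, eq_div_iff hdc]
    linear_combination -hsum1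
  have hab : (s1.card:ℝ) = s2.card := by linear_combination hsum1 - sq * hcd
  have hcardsR : (s1.card:ℝ) + s2.card + s3.card + s4.card = 4*(k:ℝ)+2 := by
    have : ((s1.card + s2.card + s3.card + s4.card : ℕ) : ℝ) = ((4*k+2 : ℕ) : ℝ) := by
      rw [hcards]
    push_cast at this
    linarith only [this]
  have hc5 : ((s3.card:ℝ) - 2*k) * (8*(k:ℝ)+4) = 0 := by
    linear_combination hsum2 - hcardsR + (4*(k:ℝ)+2) * hcd
  have hc2k : (s3.card:ℝ) = 2*(k:ℝ) := by
    rcases mul_eq_zero.mp hc5 with h | h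
    · linarith only [h]
    · exfalso
      have hk0 : (0:ℝ) ≤ (k:ℝ) := Nat.cast_nonneg k
      linarith only [h, hk0]
  have ha1 : (s1.card:ℝ) = 1 := by linarith only [hcardsR, hab, hcd, hc2k]
  -- convert to ℕ
  have hc2kN : s3.card = 2*k := by exact_mod_cast hc2k
  have hd2kN : s4.card = 2*k := by
    have : (s4.card:ℝ) = 2*(k:ℝ) := by linarith only [hcd, hc2k]
    exact_mod_cast this
  have ha1N : s1.card = 1 := by exact_mod_cast ha1
  have hb1N : s2.card = 1 := by
    have : (s2.card:ℝ) = 1 := by linarith only [hab, ha1]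
    exact_mod_cast this
  -- final computation of root multiplicities
  rw [hcp]
  refine ⟨?_, ?_, ?_, ?_⟩
  · rw [rootMultiplicity_prod_X_sub_C]
    rw [show (Finset.univ.filter fun i => ((ev i : ℝ):ℂ) = ((sq:ℝ):ℂ)) = s3 by
      rw [hs3]; apply Finset.filter_congr; intro i _; exact_mod_cast Iff.rfl]
    exact hc2kN
  · rw [rootMultiplicity_prod_X_sub_C]
    rw [show (Finset.univ.filter fun i => ((ev i : ℝ):ℂ) = 1) = s1 by
      rw [hs1]; apply Finset.filter_congr; intro i _
      constructor
      · intro h; exact_mod_cast h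
      · intro h; exact_mod_cast h]
    exact ha1N
  · rw [rootMultiplicity_prod_X_sub_C]
    rw [show (Finset.univ.filter fun i => ((ev i : ℝ):ℂ) = -1) = s2 by
      rw [hs2]; apply Finset.filter_congr; intro i _
      constructor
      · intro h; exact_mod_cast h
      · intro h; exact_mod_cast h]
    exact hb1N
  · rw [rootMultiplicity_prod_X_sub_C]
    rw [show (Finset.univ.filter fun i => ((ev i : ℝ):ℂ) = -((sq:ℝ):ℂ)) = s4 by
      rw [hs4]; apply Finset.filter_congr; intro i _
      constructor
      · intro h; exact_mod_cast h
      · intro h; exact_mod_cast h]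
    exact hd2kN
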